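/- The subspace H_2^{≥2} = span_ℂ{ v_{x^a y^b} : a, b ≥ 0, a + b ≥ 2 } of derivations of ℂ[x,y] is a Lie subalgebra, and it is generated as a Lie algebra by the elements v_{x^a} for a ≥ 2 together with the elements v_{y^b} for b ≥ 2. -/

import Mathlib

open MvPolynomial

/-- The polynomial ring `ℂ[x,y]`, with `x = X 0`, `y = X 1`. -/
abbrev P2 : Type := MvPolynomial (Fin 2) ℂ

/-- The Hamiltonian vector field `v_H = H_x ∂_y − H_y ∂_x`, as a derivation of `ℂ[x,y]`. -/
noncomputable def ham (H : P2) : Derivation ℂ P2 P2 :=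
  (pderiv 0 H) • (pderiv 1 : Derivation ℂ P2 P2)
    - (pderiv 1 H) • (pderiv 0 : Derivation ℂ P2 P2)


lemma pderiv_pderiv_comm {σ R : Type*} [CommSemiring R] [DecidableEq σ] (i j : σ)
    (f : MvPolynomial σ R) : pderiv i (pderiv j f) = pderiv j (pderiv i f) := by
  induction f using MvPolynomial.induction_on with
  | C a => simp
  | add p q hp hq => simp [hp, hq]
  | mul_X p n hp =>
      simp only [pderiv_mul, map_add, hp, pderiv_X, Pi.single_apply]
      split_ifs <;> simp <;> ring

lemma ham_apply (H f : P2) : ham H f = pderiv 0 H * pderiv 1 f - pderiv 1 H * pderiv 0 f := by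
  simp [ham, Derivation.coe_smul, smul_eq_mul]

lemma ham_X0 (H : P2) : ham H (X 0) = - pderiv 1 H := by
  simp [ham_apply, pderiv_X, Pi.single_apply]

lemma ham_X1 (H : P2) : ham H (X 1) = pderiv 0 H := by
  simp [ham_apply, pderiv_X, Pi.single_apply]

lemma ham_sub (F G : P2) : ham (F - G) = ham F - ham G := by
  unfold ham; simp only [map_sub]; module

lemma ham_Cmul (c : ℂ) (F : P2) : ham (C c * F) = c • ham F := by
  unfold ham
  simp only [pderiv_C_mul, C_mul', Derivation.map_smul, smul_assoc, smul_sub]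

lemma ham_bracket (F G : P2) :
    ⁅ham F, ham G⁆ = ham (pderiv 0 F * pderiv 1 G - pderiv 1 F * pderiv 0 G) := by
  apply derivation_ext
  intro i
  fin_cases i <;>
  · simp only [Derivation.commutator_apply, ham_X0, ham_X1, map_neg, map_sub, ham_apply,
      Derivation.leibniz, smul_eq_mul, pderiv_mul, pderiv_X, Pi.single_apply]
    norm_num
    rw [pderiv_pderiv_comm 1 0 F, pderiv_pderiv_comm 1 0 G]
    ring

lemma pd_mon0 (a b : ℕ) :
    pderiv 0 (X 0^a * X 1^b : P2) = C (a:ℂ) * (X 0^(a-1) * X 1^b) := by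
  rw [pderiv_mul, pderiv_pow, pderiv_pow]
  simp [pderiv_X, Pi.single_apply, C_eq_coe_nat]
  ring

lemma pd_mon1 (a b : ℕ) :
    pderiv 1 (X 0^a * X 1^b : P2) = C (b:ℂ) * (X 0^a * X 1^(b-1)) := by
  rw [pderiv_mul, pderiv_pow, pderiv_pow]
  simp [pderiv_X, Pi.single_apply, C_eq_coe_nat]
  ring

lemma bracket_mon (a b c d : ℕ) :
    ⁅ham (X 0^a * X 1^b), ham (X 0^c * X 1^d)⁆
      = ((a*d : ℕ) : ℂ) • ham (X 0^(a-1+c) * X 1^(b+(d-1)))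
        - ((b*c : ℕ) : ℂ) • ham (X 0^(a+(c-1)) * X 1^(b-1+d)) := by
  rw [ham_bracket, pd_mon0, pd_mon1, pd_mon0, pd_mon1, ham_sub, ← ham_Cmul, ← ham_Cmul]
  congr 2
  · rw [Nat.cast_mul, map_mul, pow_add, pow_add]; ring
  · rw [Nat.cast_mul, map_mul, pow_add, pow_add]; ring


/-- The subspace `H₂^{≥2} = span{ v_{x^a y^b} : a + b ≥ 2 }` of derivations of `ℂ[x,y]`. -/
noncomputable def H2ge2 : Submodule ℂ (Derivation ℂ P2 P2) :=
  Submodule.span ℂ {D | ∃ a b : ℕ, 2 ≤ a + b ∧ D = ham (X 0 ^ a * X 1 ^ b)}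

/-- The generators `v_{x^a}` (`a ≥ 2`) and `v_{y^b}` (`b ≥ 2`). -/
noncomputable def hamGens : Set (Derivation ℂ P2 P2) :=
  {D | ∃ a : ℕ, 2 ≤ a ∧ (D = ham (X 0 ^ a) ∨ D = ham (X 1 ^ a))}


lemma mon_mem {a b : ℕ} (h : 2 ≤ a + b) : ham (X 0 ^ a * X 1 ^ b) ∈ H2ge2 :=
  Submodule.subset_span ⟨a, b, h, rfl⟩

section BracketHelpers
variable (t : ℂ) (D E F : Derivation ℂ P2 P2)
lemma hzero_lie : ⁅(0 : Derivation ℂ P2 P2), E⁆ = 0 := by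
  ext f; simp [Derivation.commutator_apply]
lemma hlie_zero : ⁅D, (0 : Derivation ℂ P2 P2)⁆ = 0 := by
  ext f; simp [Derivation.commutator_apply]
lemma hadd_lie : ⁅D + E, F⁆ = ⁅D, F⁆ + ⁅E, F⁆ := by
  ext f; simp [Derivation.commutator_apply]; ring
lemma hlie_add : ⁅D, E + F⁆ = ⁅D, E⁆ + ⁅D, F⁆ := by
  ext f; simp [Derivation.commutator_apply]; ring
lemma hsmul_lie : ⁅t • D, E⁆ = t • ⁅D, E⁆ := by
  ext f; simp [Derivation.commutator_apply, smul_sub]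
lemma hlie_smul : ⁅D, t • E⁆ = t • ⁅D, E⁆ := by
  ext f; simp [Derivation.commutator_apply, smul_sub]
end BracketHelpers

lemma hamClosure : ∀ D D' : Derivation ℂ P2 P2, D ∈ H2ge2 → D' ∈ H2ge2 → ⁅D, D'⁆ ∈ H2ge2 := by
  have base : ∀ a b c d : ℕ, 2 ≤ a + b → 2 ≤ c + d →
      ⁅ham (X 0^a * X 1^b), ham (X 0^c * X 1^d)⁆ ∈ H2ge2 := by
    intro a b c d hab hcd
    rw [bracket_mon]
    exact sub_mem (Submodule.smul_mem _ _ (mon_mem (by omega)))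
      (Submodule.smul_mem _ _ (mon_mem (by omega)))
  intro D D' hD hD'
  induction hD' using Submodule.span_induction with
  | mem x hx =>
      obtain ⟨c, d, hcd, rfl⟩ := hx
      induction hD using Submodule.span_induction with
      | mem y hy => obtain ⟨a, b, hab, rfl⟩ := hy; exact base a b c d hab hcd
      | zero => rw [hzero_lie]; exact zero_mem _
      | add y z _ _ hy hz => rw [hadd_lie]; exact add_mem hy hz
      | smul t y _ hy => rw [hsmul_lie]; exact Submodule.smul_mem _ _ hy
  | zero => rw [hlie_zero]; exact zero_mem _
  | add y z _ _ hy hz => rw [hlie_add]; exact add_mem hy hz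
  | smul t y _ hy => rw [hlie_smul]; exact Submodule.smul_mem _ _ hy

lemma ham_x_pow (a : ℕ) : ham (X 0 ^ a * X 1 ^ 0 : P2) = ham (X 0 ^ a) := by
  rw [pow_zero, mul_one]

lemma ham_y_pow (b : ℕ) : ham (X 0 ^ 0 * X 1 ^ b : P2) = ham (X 1 ^ b) := by
  rw [pow_zero, one_mul]


theorem stmt1 :
    (∀ D D' : Derivation ℂ P2 P2, D ∈ H2ge2 → D' ∈ H2ge2 → ⁅D, D'⁆ ∈ H2ge2) ∧
    ((LieSubalgebra.lieSpan ℂ (Derivation ℂ P2 P2) hamGens : Set (Derivation ℂ P2 P2)) =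
      (H2ge2 : Set (Derivation ℂ P2 P2))) := by
  refine ⟨hamClosure, ?_⟩
  let K : LieSubalgebra ℂ (Derivation ℂ P2 P2) :=
    { H2ge2 with lie_mem' := fun hx hy => hamClosure _ _ hx hy }
  apply Set.Subset.antisymm
  · have : LieSubalgebra.lieSpan ℂ (Derivation ℂ P2 P2) hamGens ≤ K := by
      rw [LieSubalgebra.lieSpan_le]
      rintro D ⟨a, ha, h | h⟩ <;> subst h
      · show ham (X 0 ^ a) ∈ H2ge2
        rw [← ham_x_pow]; exact mon_mem (by omega)
      · show ham (X 1 ^ a) ∈ H2ge2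
        rw [← ham_y_pow]; exact mon_mem (by omega)
    exact fun D hD => this hD
  · intro D hD
    have hD' : D ∈ H2ge2 := hD
    simp only [SetLike.mem_coe]
    refine Submodule.span_induction ?_ ?_ ?_ ?_ hD'
    · rintro _ ⟨a, b, hab, rfl⟩
      rcases Nat.eq_zero_or_pos b with hb | hb
      · subst hb
        rw [ham_x_pow]
        exact LieSubalgebra.subset_lieSpan ⟨a, by omega, Or.inl rfl⟩
      rcases Nat.eq_zero_or_pos a with ha | ha
      · subst ha
        rw [ham_y_pow]
        exact LieSubalgebra.subset_lieSpan ⟨b, by omega, Or.inr rfl⟩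
      · -- a, b ≥ 1
        have key := bracket_mon (a+1) 0 0 (b+1)
        simp only [Nat.mul_zero, Nat.zero_mul, Nat.cast_zero, zero_smul, sub_zero,
          Nat.add_sub_cancel, Nat.add_zero, Nat.zero_add] at key
        have h2 : ham (X 0 ^ a * X 1 ^ b) =
            ((((a+1) * (b+1) : ℕ) : ℂ))⁻¹ • ⁅ham (X 0 ^ (a+1) : P2), ham (X 1 ^ (b+1) : P2)⁆ := by
          rw [← ham_x_pow (a+1), ← ham_y_pow (b+1), key, smul_smul, inv_mul_cancel₀, one_smul]
          · exact Nat.cast_ne_zero.mpr (by positivity)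
        rw [h2]
        refine (LieSubalgebra.lieSpan ℂ (Derivation ℂ P2 P2) hamGens).smul_mem _ ?_
        exact LieSubalgebra.lie_mem _
          (LieSubalgebra.subset_lieSpan ⟨a+1, by omega, Or.inl rfl⟩)
          (LieSubalgebra.subset_lieSpan ⟨b+1, by omega, Or.inr rfl⟩)
    · exact zero_mem _
    · exact fun x y _ _ hx hy => add_mem hx hy
    · exact fun c x _ hx => Submodule.smul_mem _ _ hx
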